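/- Local search with single swaps is a 5-approximation for k-median: let k be an integer with 1 ≤ k ≤ |F| and let S ⊆ F with |S| = k be locally optimal under single swaps, i.e., for every c ∈ S and every c' ∈ F, cost((S − {c}) ∪ {c'}) ≥ cost(S). Then cost(S) ≤ 5·opt_k. -/

import Mathlib

open Finset

/-- `d(p,S)`: distance from `p` to the closest point of `S` (junk `0` if `S = ∅`). -/
noncomputable def dS {X : Type*} [MetricSpace X] (p : X) (S : Finset X) : ℝ :=
  if h : S.Nonempty then S.inf' h (fun c => dist p c) else 0

/-- `cost(S) = Σ_{p∈D} d(p,S)`. -/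
noncomputable def kmCost {X : Type*} [MetricSpace X] (D S : Finset X) : ℝ :=
  ∑ p ∈ D, dS p S

/-- `opt_k = min{cost(T) : T ⊆ F, |T| = k}`. -/
noncomputable def kmOpt {X : Type*} [MetricSpace X] (D F : Finset X) (k : ℕ) : ℝ :=
  sInf {c : ℝ | ∃ T : Finset X, T ⊆ F ∧ T.card = k ∧ kmCost D T = c}


lemma dS_le {X : Type*} [MetricSpace X] (p c : X) {S : Finset X} (hc : c ∈ S) :
    dS p S ≤ dist p c := by
  rw [dS, dif_pos ⟨c, hc⟩]
  exact inf'_le _ hc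

lemma exists_nearest {X : Type*} [MetricSpace X] (p : X) {S : Finset X} (h : S.Nonempty) :
    ∃ c, c ∈ S ∧ dS p S = dist p c := by
  rw [dS, dif_pos h]
  exact exists_mem_eq_inf' h _

/-- The swap-pairing lemma: given `σ : O → S` ("capture" map) with `|O| = |S|`, there is
`π : O → S` such that each `o` is paired with a center `π o` capturing nothing but
possibly `o` itself, and each center is used at most twice. -/

lemma exists_pairing {α : Type*} [DecidableEq α] (O S : Finset α) (σ : α → α)
    (hσ : ∀ o ∈ O, σ o ∈ S) (hcard : O.card = S.card) :
    ∃ π : α → α, (∀ o ∈ O, π o ∈ S) ∧ (∀ o ∈ O, ∀ o' ∈ O, σ o' = π o → o' = o) ∧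
      (∀ s, (O.filter (fun o => π o = s)).card ≤ 2) := by
  classical
  set C : α → Finset α := fun s => O.filter (fun o => σ o = s) with hC
  set O1 : Finset α := O.filter (fun o => (C (σ o)).card = 1) with hO1
  set R : Finset α := O \ O1 with hR
  set B1 : Finset α := S.filter (fun s => (C s).card = 1) with hB1
  set B2 : Finset α := S.filter (fun s => 2 ≤ (C s).card) with hB2
  set G : Finset α := S.filter (fun s => C s = ∅) with hG
  have hmemC : ∀ o ∈ O, o ∈ C (σ o) := fun o ho => mem_filter.mpr ⟨ho, rfl⟩
  have hGnot : ∀ s ∈ G, ∀ o ∈ O, σ o ≠ s := by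
    intro s hs o ho h
    have : o ∈ C s := mem_filter.mpr ⟨ho, h⟩
    rw [(mem_filter.mp hs).2] at this
    exact notMem_empty o this
  -- counting
  have hO1B1 : O1.card = B1.card := by
    apply card_bij (fun o _ => σ o)
    · intro o ho
      obtain ⟨hoO, hc⟩ := mem_filter.mp ho
      exact mem_filter.mpr ⟨hσ o hoO, hc⟩
    · intro o ho o' ho' h
      obtain ⟨hoO, hc⟩ := mem_filter.mp ho
      obtain ⟨ho'O, _⟩ := mem_filter.mp ho'
      have h2 : o' ∈ C (σ o) := by rw [h]; exact hmemC o' ho'O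
      exact card_le_one.mp hc.le _ (hmemC o hoO) _ h2 |>.symm ▸ rfl
    · intro s hs
      obtain ⟨hsS, hc⟩ := mem_filter.mp hs
      obtain ⟨o, hoe⟩ := card_eq_one.mp hc
      have hoC : o ∈ C s := hoe ▸ mem_singleton_self o
      obtain ⟨hoO, hos⟩ := mem_filter.mp hoC
      exact ⟨o, mem_filter.mpr ⟨hoO, by rw [hos]; exact hc⟩, hos⟩
  have hRfib : ∀ o ∈ R, σ o ∈ B2 := by
    intro o ho
    obtain ⟨hoO, hno1⟩ := mem_sdiff.mp ho
    have h1 : 1 ≤ (C (σ o)).card := card_pos.mpr ⟨o, hmemC o hoO⟩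
    have hne1 : (C (σ o)).card ≠ 1 := fun h => hno1 (mem_filter.mpr ⟨hoO, h⟩)
    exact mem_filter.mpr ⟨hσ o hoO, by omega⟩
  have hRcard : R.card = ∑ s ∈ B2, (R.filter (fun o => σ o = s)).card :=
    card_eq_sum_card_fiberwise hRfib
  have hfibeq : ∀ s ∈ B2, R.filter (fun o => σ o = s) = C s := by
    intro s hs
    obtain ⟨hsS, hc2⟩ := mem_filter.mp hs
    ext o
    constructor
    · intro h
      obtain ⟨hoR, hos⟩ := mem_filter.mp h
      exact mem_filter.mpr ⟨(mem_sdiff.mp hoR).1, hos⟩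
    · intro h
      obtain ⟨hoO, hos⟩ := mem_filter.mp h
      refine mem_filter.mpr ⟨mem_sdiff.mpr ⟨hoO, ?_⟩, hos⟩
      intro h1
      have := (mem_filter.mp h1).2
      rw [hos] at this
      omega
  have hB2le : 2 * B2.card ≤ R.card := by
    have hstep : ∀ s ∈ B2, 2 ≤ (R.filter (fun o => σ o = s)).card := by
      intro s hs
      rw [hfibeq s hs]
      exact (mem_filter.mp hs).2
    calc 2 * B2.card = ∑ _s ∈ B2, 2 := by rw [sum_const, smul_eq_mul, mul_comm]
    _ ≤ ∑ s ∈ B2, (R.filter (fun o => σ o = s)).card := sum_le_sum hstep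
    _ = R.card := hRcard.symm
  have hSsub : S ⊆ (B1 ∪ B2) ∪ G := by
    intro s hs
    by_cases h1 : (C s).card = 1
    · exact mem_union_left _ (mem_union_left _ (mem_filter.mpr ⟨hs, h1⟩))
    by_cases h0 : (C s).card = 0
    · exact mem_union_right _ (mem_filter.mpr ⟨hs, card_eq_zero.mp h0⟩)
    · exact mem_union_left _ (mem_union_right _ (mem_filter.mpr ⟨hs, by omega⟩))
  have hcover : S.card ≤ B1.card + B2.card + G.card :=
    (card_le_card hSsub).trans ((card_union_le _ _).trans
      (Nat.add_le_add_right (card_union_le _ _) _))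
  have hOsplit : R.card + O1.card = O.card :=
    card_sdiff_add_card_eq_card (filter_subset _ _)
  have hRG : R.card ≤ 2 * G.card := by omega
  -- the embedding
  have hcard2 : Fintype.card ↥R ≤ Fintype.card (↥G × Fin 2) := by
    rw [Fintype.card_prod, Fintype.card_coe, Fintype.card_coe, Fintype.card_fin]
    omega
  obtain ⟨e⟩ := Function.Embedding.nonempty_of_card_le hcard2
  refine ⟨fun o => if h : o ∈ R then ((e ⟨o, h⟩).1 : α) else σ o, ?_, ?_, ?_⟩
  · intro o ho
    beta_reduce
    by_cases h : o ∈ R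
    · rw [dif_pos h]
      exact (mem_filter.mp (e ⟨o, h⟩).1.2).1
    · rw [dif_neg h]
      exact hσ o ho
  · intro o ho o' ho' h
    beta_reduce at h
    by_cases hr : o ∈ R
    · rw [dif_pos hr] at h
      exact absurd h (hGnot _ (e ⟨o, hr⟩).1.2 o' ho')
    · rw [dif_neg hr] at h
      have hoO1 : o ∈ O1 := by
        by_contra hno
        exact hr (mem_sdiff.mpr ⟨ho, hno⟩)
      have hc1 : (C (σ o)).card = 1 := (mem_filter.mp hoO1).2
      have h2 : o' ∈ C (σ o) := mem_filter.mpr ⟨ho', h⟩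
      exact card_le_one.mp hc1.le _ h2 _ (hmemC o ho)
  · intro s
    by_cases hsG : s ∈ G
    · -- all preimages in R; inject into Fin 2
      have hsub : ∀ o ∈ O.filter (fun o => (if h : o ∈ R then ((e ⟨o, h⟩).1 : α) else σ o) = s),
          o ∈ R := by
        intro o ho
        obtain ⟨hoO, hπ⟩ := mem_filter.mp ho
        by_contra hr
        rw [dif_neg hr] at hπ
        exact hGnot s hsG o hoO hπ
      have : (O.filter (fun o => (if h : o ∈ R then ((e ⟨o, h⟩).1 : α) else σ o) = s)).card
          ≤ (univ : Finset (Fin 2)).card := by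
        apply card_le_card_of_injOn (fun o => if h : o ∈ R then (e ⟨o, h⟩).2 else 0)
        · intro o _; exact mem_univ _
        · intro o ho o' ho' hf
          have hoR := hsub o ho
          have ho'R := hsub o' ho'
          beta_reduce at hf
          rw [dif_pos hoR, dif_pos ho'R] at hf
          have h1 : ((e ⟨o, hoR⟩).1 : α) = s := by
            have := (mem_filter.mp ho).2; rwa [dif_pos hoR] at this
          have h1' : ((e ⟨o', ho'R⟩).1 : α) = s := by
            have := (mem_filter.mp ho').2; rwa [dif_pos ho'R] at this
          have hfst : (e ⟨o, hoR⟩).1 = (e ⟨o', ho'R⟩).1 := Subtype.ext (h1.trans h1'.symm)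
          have : e ⟨o, hoR⟩ = e ⟨o', ho'R⟩ := Prod.ext hfst hf
          have := e.injective this
          exact Subtype.mk_eq_mk.mp this
      simpa using this
    · -- all preimages outside R; at most one (singly captured)
      apply card_le_one.mpr ?_ |>.trans (by omega)
      intro o ho o' ho'
      obtain ⟨hoO, hπ⟩ := mem_filter.mp ho
      obtain ⟨ho'O, hπ'⟩ := mem_filter.mp ho'
      beta_reduce at hπ hπ'
      have hr : o ∉ R := by
        intro hr
        rw [dif_pos hr] at hπ
        exact hsG (hπ ▸ (e ⟨o, hr⟩).1.2)
      have hr' : o' ∉ R := by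
        intro hr'
        rw [dif_pos hr'] at hπ'
        exact hsG (hπ' ▸ (e ⟨o', hr'⟩).1.2)
      rw [dif_neg hr] at hπ
      rw [dif_neg hr'] at hπ'
      have hoO1 : o ∈ O1 := by
        by_contra hno
        exact hr (mem_sdiff.mpr ⟨hoO, hno⟩)
      have hc1 : (C (σ o)).card = 1 := (mem_filter.mp hoO1).2
      have h2 : o' ∈ C (σ o) := mem_filter.mpr ⟨ho'O, by rw [hπ', hπ]⟩
      exact card_le_one.mp hc1.le _ (hmemC o hoO) _ h2

/-- Local search with single swaps is a 5-approximation for k-median: if `S ⊆ F` with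
`|S| = k` is locally optimal under single swaps (no swap of one center of `S` for one
center of `F` decreases the cost), then `cost(S) ≤ 5·opt_k`. -/
theorem local_search_five_approximation {X : Type*} [MetricSpace X] [DecidableEq X]
    (D F : Finset X) (hD : D.Nonempty) (hF : F.Nonempty)
    (k : ℕ) (hk1 : 1 ≤ k) (hk2 : k ≤ F.card)
    (S : Finset X) (hSF : S ⊆ F) (hScard : S.card = k)
    (hlocal : ∀ c ∈ S, ∀ c' ∈ F, kmCost D S ≤ kmCost D (insert c' (S.erase c))) :
    kmCost D S ≤ 5 * kmOpt D F k := by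
  classical
  have hS : S.Nonempty := card_pos.mp (by omega)
  -- find an optimal solution O attaining the infimum
  have hset : {c : ℝ | ∃ T : Finset X, T ⊆ F ∧ T.card = k ∧ kmCost D T = c}
      = ↑((F.powersetCard k).image (kmCost D)) := by
    ext c
    simp only [Set.mem_setOf_eq, coe_image, Set.mem_image, mem_coe, mem_powersetCard]
    constructor
    · rintro ⟨T, h1, h2, h3⟩; exact ⟨T, ⟨h1, h2⟩, h3⟩
    · rintro ⟨T, ⟨h1, h2⟩, h3⟩; exact ⟨T, h1, h2, h3⟩
  have hAne : ((F.powersetCard k).image (kmCost D)).Nonempty := by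
    obtain ⟨T, hT1, hT2⟩ := exists_subset_card_eq hk2
    exact ⟨_, mem_image_of_mem _ (mem_powersetCard.mpr ⟨hT1, hT2⟩)⟩
  have hopt : ∃ T : Finset X, T ⊆ F ∧ T.card = k ∧ kmCost D T = kmOpt D F k := by
    rw [kmOpt, hset, hAne.csInf_eq_min']
    have := min'_mem _ hAne
    obtain ⟨T, hT, hTeq⟩ := mem_image.mp this
    obtain ⟨h1, h2⟩ := mem_powersetCard.mp hT
    exact ⟨T, h1, h2, hTeq⟩
  obtain ⟨O, hOF, hOcard, hOopt⟩ := hopt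
  rw [← hOopt]
  have hO : O.Nonempty := card_pos.mp (by omega)
  -- nearest-center functions
  obtain ⟨sj, hsj⟩ := Classical.axiomOfChoice (fun p : X => exists_nearest p hS)
  obtain ⟨oj, hoj⟩ := Classical.axiomOfChoice (fun p : X => exists_nearest p hO)
  have hsjS : ∀ p, sj p ∈ S := fun p => (hsj p).1
  have hsjd : ∀ p, dS p S = dist p (sj p) := fun p => (hsj p).2
  have hojO : ∀ p, oj p ∈ O := fun p => (hoj p).1
  have hojd : ∀ p, dS p O = dist p (oj p) := fun p => (hoj p).2
  -- the pairing (σ := sj restricted to O gives the "capture" map)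
  obtain ⟨π, hπS, hπcap, hπ2⟩ := exists_pairing O S sj (fun o _ => hsjS o)
    (by rw [hOcard, hScard])
  set T : X → Finset X := fun o => insert o (S.erase (π o)) with hT
  -- local optimality
  have step1 : ∀ o ∈ O, kmCost D S ≤ kmCost D (T o) := fun o ho =>
    hlocal (π o) (hπS o ho) o (hOF ho)
  -- per-swap upper bound
  set Δ : X → X → ℝ := fun p o =>
    (if oj p = o then dist p (oj p) - dS p S else 0) +
    (if π o = sj p ∧ oj p ≠ o then 2 * dist p (oj p) else 0) with hΔ
  have step2 : ∀ o ∈ O, kmCost D (T o) - kmCost D S ≤ ∑ p ∈ D, Δ p o := by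
    intro o ho
    have heq : kmCost D (T o) - kmCost D S = ∑ p ∈ D, (dS p (T o) - dS p S) := by
      rw [kmCost, kmCost, sum_sub_distrib]
    rw [heq]
    apply sum_le_sum
    intro p _
    rw [hΔ]; beta_reduce
    by_cases h1 : oj p = o
    · have hb : dS p (T o) ≤ dist p o := dS_le p o (mem_insert_self o _)
      rw [if_pos h1, if_neg (by tauto)]
      have hd : dist p o = dist p (oj p) := by rw [h1]
      linarith
    · rw [if_neg h1]
      by_cases h2 : π o = sj p
      · rw [if_pos ⟨h2, h1⟩]
        -- reassign p to sj (oj p), which is ≠ π o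
        have hne : sj (oj p) ≠ π o := fun h => h1 (hπcap o ho (oj p) (hojO p) h)
        have hmem : sj (oj p) ∈ T o :=
          mem_insert_of_mem (mem_erase.mpr ⟨hne, hsjS (oj p)⟩)
        have hb : dS p (T o) ≤ dist p (sj (oj p)) := dS_le _ _ hmem
        have ht1 : dist p (sj (oj p)) ≤ dist p (oj p) + dist (oj p) (sj (oj p)) :=
          dist_triangle _ _ _
        have ht2 : dist (oj p) (sj (oj p)) ≤ dist (oj p) (sj p) :=
          (hsjd (oj p)) ▸ dS_le (oj p) (sj p) (hsjS p)
        have ht3 : dist (oj p) (sj p) ≤ dist (oj p) p + dist p (sj p) := dist_triangle _ _ _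
        have ht4 : dist (oj p) p = dist p (oj p) := dist_comm _ _
        have ht5 : dist p (sj p) = dS p S := (hsjd p).symm
        linarith
      · rw [if_neg (by tauto)]
        have hmem : sj p ∈ T o := mem_insert_of_mem
          (mem_erase.mpr ⟨fun h => h2 h.symm, hsjS p⟩)
        have hb : dS p (T o) ≤ dist p (sj p) := dS_le _ _ hmem
        rw [← hsjd p] at hb
        linarith
  -- per-client bound on the total reassignment charge
  have step3 : ∀ p ∈ D, ∑ o ∈ O, Δ p o ≤ 5 * dist p (oj p) - dS p S := by
    intro p _
    rw [hΔ]; beta_reduce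
    rw [sum_add_distrib]
    have e1 : ∑ o ∈ O, (if oj p = o then dist p (oj p) - dS p S else 0)
        = dist p (oj p) - dS p S := by
      rw [sum_ite_eq O (oj p) (fun _ => dist p (oj p) - dS p S), if_pos (hojO p)]
    have e2 : ∑ o ∈ O, (if π o = sj p ∧ oj p ≠ o then 2 * dist p (oj p) else 0)
        ≤ 4 * dist p (oj p) := by
      have hle : ∀ o ∈ O, (if π o = sj p ∧ oj p ≠ o then 2 * dist p (oj p) else 0)
          ≤ (if π o = sj p then 2 * dist p (oj p) else 0) := by
        intro o _
        by_cases h : π o = sj p ∧ oj p ≠ o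
        · rw [if_pos h, if_pos h.1]
        · rw [if_neg h]
          by_cases h' : π o = sj p
          · rw [if_pos h']; positivity
          · rw [if_neg h']
      calc ∑ o ∈ O, (if π o = sj p ∧ oj p ≠ o then 2 * dist p (oj p) else 0)
          ≤ ∑ o ∈ O, (if π o = sj p then 2 * dist p (oj p) else 0) := sum_le_sum hle
        _ = ∑ _o ∈ O.filter (fun o => π o = sj p), 2 * dist p (oj p) :=
            (sum_filter _ _).symm
        _ = ((O.filter (fun o => π o = sj p)).card : ℝ) * (2 * dist p (oj p)) := by
            rw [sum_const, nsmul_eq_mul]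
        _ ≤ 2 * (2 * dist p (oj p)) := by
            apply mul_le_mul_of_nonneg_right _ (by positivity)
            exact_mod_cast hπ2 (sj p)
        _ = 4 * dist p (oj p) := by ring
    linarith
  -- put it together
  have key : (0:ℝ) ≤ 5 * kmCost D O - kmCost D S := by
    have h0 : (0:ℝ) ≤ ∑ o ∈ O, (kmCost D (T o) - kmCost D S) :=
      sum_nonneg fun o ho => sub_nonneg.mpr (step1 o ho)
    have h1 : ∑ o ∈ O, (kmCost D (T o) - kmCost D S) ≤ ∑ o ∈ O, ∑ p ∈ D, Δ p o :=
      sum_le_sum step2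
    have h2 : ∑ o ∈ O, ∑ p ∈ D, Δ p o = ∑ p ∈ D, ∑ o ∈ O, Δ p o := sum_comm
    have h3 : ∑ p ∈ D, ∑ o ∈ O, Δ p o ≤ ∑ p ∈ D, (5 * dist p (oj p) - dS p S) :=
      sum_le_sum step3
    have h4 : ∑ p ∈ D, (5 * dist p (oj p) - dS p S) = 5 * kmCost D O - kmCost D S := by
      rw [sum_sub_distrib, kmCost, kmCost, mul_sum]
      congr 1
      exact sum_congr rfl fun p _ => by rw [hojd p]
    linarith
  linarith
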